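/- arXiv:2403.16117 — 7 statements merged into one kernel-verified Lean document; each statement's English description precedes it below -/
import Mathlib

section
/- Let A ∈ ℤ^{d×n} be an integer matrix, let Δ = max_{j∈[d], i∈[n]} |A_{j,i}|, let u ∈ ℕ^n with u_i ≥ 1 for all i ∈ [n], let x ∈ ℕ^n with x ≤ u componentwise, and set b = Ax. Then there exists x' ∈ ℕ^n such that, with u' ∈ ℕ^n defined by u'_i = ⌊(u_i − 1)/2⌋ for every i ∈ [n]: (i) x' ≤ u' componentwise; (ii) ‖2Ax' − b‖_∞ ≤ 2nΔ; and (iii) 0 ≤ x_i − 2x'_i ≤ u_i − 2u'_i ≤ 2 for every i ∈ [n]. -/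
/-- halving lemma for bounded ILP solutions.
`A ∈ ℤ^{d×n}`, `Δ` the maximum absolute value of an entry of `A`,
`u ∈ ℕ^n` with `u i ≥ 1`, `x ∈ ℕ^n` with `x ≤ u`, `b = Ax`.  Then there is
`x' ∈ ℕ^n` with `x' ≤ u' := ⌊(u-1)/2⌋`, `‖2Ax' - b‖_∞ ≤ 2nΔ` and
`0 ≤ x i - 2 x' i ≤ u i - 2 u' i ≤ 2` for all `i`. -/
theorem stmt0 (d n : ℕ) (A : Matrix (Fin d) (Fin n) ℤ) (Δ : ℤ)
    (hΔ : IsGreatest {x : ℤ | ∃ j i, |A j i| = x} Δ)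
    (u x : Fin n → ℕ) (hu : ∀ i, 1 ≤ u i) (hx : ∀ i, x i ≤ u i) :
    ∃ x' : Fin n → ℕ,
      (∀ i, x' i ≤ (u i - 1) / 2) ∧
      (∀ j : Fin d,
        |2 * ∑ i, A j i * (x' i : ℤ) - ∑ i, A j i * (x i : ℤ)| ≤ 2 * n * Δ) ∧
      (∀ i, 0 ≤ (x i : ℤ) - 2 * (x' i : ℤ) ∧
        (x i : ℤ) - 2 * (x' i : ℤ) ≤ (u i : ℤ) - 2 * (((u i - 1) / 2 : ℕ) : ℤ) ∧
        (u i : ℤ) - 2 * (((u i - 1) / 2 : ℕ) : ℤ) ≤ 2) := by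
  refine ⟨fun i => min (x i / 2) ((u i - 1) / 2), fun i => min_le_right _ _, ?_, ?_⟩
  · intro j
    have hΔ0 : 0 ≤ Δ := by
      obtain ⟨j', i', h⟩ := hΔ.1
      exact h ▸ abs_nonneg _
    have key : 2 * ∑ i, A j i * ((min (x i / 2) ((u i - 1) / 2) : ℕ) : ℤ)
        - ∑ i, A j i * (x i : ℤ)
        = ∑ i, A j i * (2 * ((min (x i / 2) ((u i - 1) / 2) : ℕ) : ℤ) - (x i : ℤ)) := by
      rw [Finset.mul_sum, ← Finset.sum_sub_distrib]
      exact Finset.sum_congr rfl fun i _ => by ring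
    rw [key]
    calc |∑ i, A j i * (2 * ((min (x i / 2) ((u i - 1) / 2) : ℕ) : ℤ) - (x i : ℤ))|
        ≤ ∑ i, |A j i * (2 * ((min (x i / 2) ((u i - 1) / 2) : ℕ) : ℤ) - (x i : ℤ))| :=
          Finset.abs_sum_le_sum_abs _ _
      _ ≤ ∑ _i : Fin n, Δ * 2 := by
          refine Finset.sum_le_sum fun i _ => ?_
          rw [abs_mul]
          have h1 : |A j i| ≤ Δ := hΔ.2 ⟨j, i, rfl⟩
          have h2 : |2 * ((min (x i / 2) ((u i - 1) / 2) : ℕ) : ℤ) - (x i : ℤ)| ≤ 2 := by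
            have := hx i; have := hu i
            rw [abs_le]; constructor <;> push_cast <;> omega
          exact mul_le_mul h1 h2 (abs_nonneg _) hΔ0
      _ = 2 * n * Δ := by simp [Finset.sum_const]; ring
  · intro i
    have := hx i; have := hu i
    refine ⟨?_, ?_, ?_⟩ <;> push_cast <;> omega
end

section
/- Let A ∈ ℤ^{d×n} be an integer matrix, let Δ = max_{j∈[d], i∈[n]} |A_{j,i}|, let b ∈ ℤ^d, let k ∈ ℕ, and let x^{(0)}, x^{(1)}, …, x^{(k)} ∈ ℕ^n satisfy Ax^{(0)} = b and ‖2Ax^{(j)} − Ax^{(j−1)}‖_∞ ≤ 2nΔ for every j ∈ [k]. Then, viewing all quantities in ℚ^d, for every j ∈ [k] one has ‖Ax^{(j)} − b/2^j‖_∞ ≤ nΔ·∑_{i=1}^{j} 2^{1−i} ≤ 2nΔ. -/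
lemma sumS (j : ℕ) : ∑ i ∈ Finset.Icc 1 j, (2 : ℚ) ^ (1 - (i : ℤ))
    = 2 - 2 ^ (1 - (j : ℤ)) := by
  induction j with
  | zero => simp
  | succ m ih =>
    rw [Finset.sum_Icc_succ_top (by omega), ih]
    have h1 : (1 - ((m : ℕ) + 1 : ℕ) : ℤ) = -(m : ℤ) := by push_cast; ring
    have h2 : (1 - (m : ℤ)) = -(m : ℤ) + 1 := by ring
    rw [h1, h2, zpow_add₀ (by norm_num : (2:ℚ) ≠ 0)]
    ring

/-- iterated halving keeps proximity to `b/2^j`.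
If `Ax⁽⁰⁾ = b` and `‖2Ax⁽ʲ⁾ − Ax⁽ʲ⁻¹⁾‖_∞ ≤ 2nΔ` for `j ∈ [k]`, then (in ℚ)
`‖Ax⁽ʲ⁾ − b/2^j‖_∞ ≤ nΔ ∑_{i=1}^{j} 2^{1−i} ≤ 2nΔ` for every `j ∈ [k]`. -/
theorem stmt1 (d n k : ℕ) (A : Matrix (Fin d) (Fin n) ℤ) (Δ : ℤ)
    (hΔ : IsGreatest {x : ℤ | ∃ j i, |A j i| = x} Δ)
    (b : Fin d → ℤ) (x : ℕ → Fin n → ℕ)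
    (h0 : ∀ r : Fin d, ∑ i, A r i * (x 0 i : ℤ) = b r)
    (hstep : ∀ j, 1 ≤ j → j ≤ k → ∀ r : Fin d,
      |2 * ∑ i, A r i * (x j i : ℤ) - ∑ i, A r i * (x (j - 1) i : ℤ)| ≤ 2 * n * Δ) :
    ∀ j, 1 ≤ j → j ≤ k →
      (∀ r : Fin d,
        |((∑ i, A r i * (x j i : ℤ) : ℤ) : ℚ) - (b r : ℚ) / 2 ^ j|
          ≤ (n : ℚ) * (Δ : ℚ) * ∑ i ∈ Finset.Icc 1 j, (2 : ℚ) ^ (1 - (i : ℤ))) ∧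
      (n : ℚ) * (Δ : ℚ) * ∑ i ∈ Finset.Icc 1 j, (2 : ℚ) ^ (1 - (i : ℤ))
        ≤ 2 * (n : ℚ) * (Δ : ℚ) := by
  have hΔ0 : (0 : ℤ) ≤ Δ := by
    obtain ⟨r, i, h⟩ := hΔ.1
    rw [← h]; exact abs_nonneg _
  have hnd : (0 : ℚ) ≤ (n : ℚ) * (Δ : ℚ) := by
    apply mul_nonneg (by positivity)
    exact_mod_cast hΔ0
  have key : ∀ j, j ≤ k → ∀ r : Fin d,
      |((∑ i, A r i * (x j i : ℤ) : ℤ) : ℚ) - (b r : ℚ) / 2 ^ j|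
        ≤ (n : ℚ) * (Δ : ℚ) * (2 - 2 ^ (1 - (j : ℤ))) := by
    intro j
    induction j with
    | zero =>
      intro _ r
      have := h0 r
      simp only [pow_zero]
      rw [div_one]
      have hb : ((∑ i, A r i * (x 0 i : ℤ) : ℤ) : ℚ) = (b r : ℚ) := by exact_mod_cast this
      rw [hb, sub_self, abs_zero]
      norm_num
    | succ m ih =>
      intro hk r
      have hprev := ih (by omega) r
      have hst := hstep (m+1) (by omega) hk r
      simp only [Nat.add_sub_cancel] at hst
      set y1 : ℚ := ((∑ i, A r i * (x (m+1) i : ℤ) : ℤ) : ℚ) with hy1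
      set y0 : ℚ := ((∑ i, A r i * (x m i : ℤ) : ℤ) : ℚ) with hy0
      have hstQ : |2 * y1 - y0| ≤ 2 * (n : ℚ) * (Δ : ℚ) := by
        rw [hy1, hy0]
        have : ((2 * n * Δ : ℤ) : ℚ) = 2 * (n : ℚ) * (Δ : ℚ) := by push_cast; ring
        rw [← this]
        exact_mod_cast hst
      have hdecomp : y1 - (b r : ℚ) / 2 ^ (m+1) =
          (2 * y1 - y0) / 2 + (y0 - (b r : ℚ) / 2 ^ m) / 2 := by
        have : (2:ℚ) ^ (m+1) = 2 * 2 ^ m := by ring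
        field_simp
        ring
      have hzp : (2 : ℚ) ^ (1 - ((m:ℕ)+1 : ℕ) : ℤ) = 2 ^ (1 - (m : ℤ)) / 2 := by
        have h1 : (1 - ((m : ℕ) + 1 : ℕ) : ℤ) = (1 - (m:ℤ)) - 1 := by push_cast; ring
        rw [h1, zpow_sub₀ (by norm_num : (2:ℚ) ≠ 0), zpow_one]
      calc |y1 - (b r : ℚ) / 2 ^ (m+1)|
          ≤ |2 * y1 - y0| / 2 + |y0 - (b r : ℚ) / 2 ^ m| / 2 := by
            rw [hdecomp]
            refine (abs_add_le _ _).trans ?_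
            rw [abs_div, abs_div]
            norm_num
        _ ≤ (2 * (n : ℚ) * (Δ : ℚ)) / 2
            + ((n : ℚ) * (Δ : ℚ) * (2 - 2 ^ (1 - (m : ℤ)))) / 2 := by
            gcongr
        _ = (n : ℚ) * (Δ : ℚ) * (2 - 2 ^ (1 - ((m:ℕ)+1 : ℕ) : ℤ)) := by
            rw [hzp]; ring
  intro j hj1 hjk
  have h2pos : (0 : ℚ) < 2 ^ (1 - (j : ℤ)) := by positivity
  constructor
  · intro r
    rw [sumS]
    exact key j hjk r
  · rw [sumS]
    nlinarith [hnd, h2pos]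
end

section
/- Let A be a d-dimensional array of size L, let W = max over all positions v of |A_v|, and set c = 2W + 1. Define an array A' of size L by A'_0 = max{0, A_0} and A'_v = A_v + c·‖v‖₁ for every position v ≠ 0. Then: (i) A'_v ≥ 0 for every position v; (ii) A' is monotone increasing; (iii) A' is superadditive if and only if A is superadditive; and (iv) every entry of A' is at most W + (2W + 1)·‖L − 1‖₁. -/
/-- making an array nonnegative and monotone while preserving
superadditivity.  `A` is an array of size `L` (entries indexed by positions
`v` with `v i < L i`), `W = max_v |A v|`, `c = 2W + 1`, and `A'` is defined by
`A' 0 = max 0 (A 0)` and `A' v = A v + c‖v‖₁` for positions `v ≠ 0`.  Then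
(i) `A'` is nonnegative, (ii) `A'` is monotone increasing, (iii) `A'` is
superadditive iff `A` is, and (iv) every entry of `A'` is at most
`W + (2W+1)‖L−1‖₁`. -/
theorem stmt2 (d : ℕ) (L : Fin d → ℕ) (hL : ∀ i, 1 ≤ L i)
    (A A' : (Fin d → ℕ) → ℤ) (W c : ℤ)
    (hW : IsGreatest {x : ℤ | ∃ v : Fin d → ℕ, (∀ i, v i < L i) ∧ |A v| = x} W)
    (hc : c = 2 * W + 1)
    (hA'0 : A' 0 = max 0 (A 0))
    (hA' : ∀ v : Fin d → ℕ, (∀ i, v i < L i) → v ≠ 0 →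
      A' v = A v + c * ∑ i, (v i : ℤ)) :
    (∀ v : Fin d → ℕ, (∀ i, v i < L i) → 0 ≤ A' v) ∧
    (∀ u v : Fin d → ℕ, (∀ i, v i < L i) → (∀ i, u i ≤ v i) → A' u ≤ A' v) ∧
    ((∀ u v : Fin d → ℕ, (∀ i, v i < L i) → (∀ i, u i ≤ v i) →
        A' u + A' (v - u) ≤ A' v) ↔
      (∀ u v : Fin d → ℕ, (∀ i, v i < L i) → (∀ i, u i ≤ v i) →
        A u + A (v - u) ≤ A v)) ∧
    (∀ v : Fin d → ℕ, (∀ i, v i < L i) →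
      A' v ≤ W + (2 * W + 1) * ∑ i, ((L i : ℤ) - 1)) := by
  have hW0 : 0 ≤ W := by
    obtain ⟨v, _, hv⟩ := hW.1
    exact hv ▸ abs_nonneg _
  have hbound : ∀ v : Fin d → ℕ, (∀ i, v i < L i) → |A v| ≤ W :=
    fun v hv => hW.2 ⟨v, hv, rfl⟩
  have h0L : ∀ i, (0 : Fin d → ℕ) i < L i := fun i => hL i
  have hsumnn : ∀ v : Fin d → ℕ, (0 : ℤ) ≤ ∑ i, (v i : ℤ) :=
    fun v => Finset.sum_nonneg fun i _ => Int.natCast_nonneg _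
  have hsum1 : ∀ v : Fin d → ℕ, v ≠ 0 → (1 : ℤ) ≤ ∑ i, (v i : ℤ) := by
    intro v hv
    obtain ⟨i, hi⟩ := Function.ne_iff.mp hv
    have h1 : (1 : ℤ) ≤ v i := by
      have : v i ≠ 0 := hi
      omega
    calc (1 : ℤ) ≤ (v i : ℤ) := h1
      _ ≤ ∑ i, (v i : ℤ) :=
        Finset.single_le_sum (fun j _ => Int.natCast_nonneg _) (Finset.mem_univ i)
  -- lower bound for nonzero positions
  have hlow : ∀ v : Fin d → ℕ, (∀ i, v i < L i) → v ≠ 0 → W + 1 ≤ A' v := by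
    intro v hv hv0
    rw [hA' v hv hv0]
    have h1 := hsum1 v hv0
    have h2' : -W ≤ A v := (neg_le_neg (hbound v hv)).trans (neg_abs_le _)
    have hcpos : 0 < c := by omega
    nlinarith [mul_le_mul_of_nonneg_left h1 hcpos.le]
  have hA0W : A 0 ≤ W := (le_abs_self _).trans (hbound 0 h0L)
  have hmax : max 0 (A 0) ≤ W := max_le hW0 hA0W
  -- pointwise equality from equal sums
  have heq : ∀ u v : Fin d → ℕ, (∀ i, u i ≤ v i) →
      (∑ i, (u i : ℤ)) = ∑ i, (v i : ℤ) → u = v := by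
    intro u v huv hs
    funext i
    by_contra h
    have hlt : (u i : ℤ) < v i := by
      have := huv i; omega
    have : (∑ i, (u i : ℤ)) < ∑ i, (v i : ℤ) :=
      Finset.sum_lt_sum (fun j _ => by exact_mod_cast huv j) ⟨i, Finset.mem_univ i, hlt⟩
    omega
  -- sum of difference
  have hsub : ∀ u v : Fin d → ℕ, (∀ i, u i ≤ v i) →
      (∑ i, ((v - u) i : ℤ)) = (∑ i, (v i : ℤ)) - ∑ i, (u i : ℤ) := by
    intro u v huv
    rw [← Finset.sum_sub_distrib]
    refine Finset.sum_congr rfl fun i _ => ?_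
    have : (v - u) i = v i - u i := rfl
    rw [this, Nat.cast_sub (huv i)]
  refine ⟨?_, ?_, ?_, ?_⟩
  · -- (i)
    intro v hv
    by_cases h0 : v = 0
    · subst h0; rw [hA'0]; exact le_max_left _ _
    · linarith [hlow v hv h0]
  · -- (ii)
    intro u v hv huv
    have hu : ∀ i, u i < L i := fun i => lt_of_le_of_lt (huv i) (hv i)
    by_cases hu0 : u = 0
    · subst hu0
      by_cases hv0 : v = 0
      · subst hv0; exact le_refl _
      · rw [hA'0]; linarith [hlow v hv hv0, hmax]
    · have hv0 : v ≠ 0 := by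
        rintro rfl
        exact hu0 (funext fun i => Nat.le_zero.mp (huv i))
      rw [hA' u hu hu0, hA' v hv hv0]
      have hsle : (∑ i, (u i : ℤ)) ≤ ∑ i, (v i : ℤ) :=
        Finset.sum_le_sum fun i _ => by exact_mod_cast huv i
      rcases eq_or_lt_of_le hsle with hse | hslt
      · rw [heq u v huv hse]
      · have h1 : (∑ i, (u i : ℤ)) + 1 ≤ ∑ i, (v i : ℤ) := hslt
        have hau : A u ≤ W := (le_abs_self _).trans (hbound u hu)
        have hav : -W ≤ A v := (neg_le_neg (hbound v hv)).trans (neg_abs_le _)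
        nlinarith [mul_le_mul_of_nonneg_left h1 (by omega : (0:ℤ) ≤ c)]
  · -- (iii)
    constructor
    · intro H
      have h00 : (0 : Fin d → ℕ) - 0 = 0 := by funext i; simp
      have hA'0le : A' 0 ≤ 0 := by
        have := H 0 0 h0L (fun i => le_refl _)
        rw [h00] at this; linarith
      have hA0le : A 0 ≤ 0 := by
        rw [hA'0] at hA'0le
        exact (le_max_right 0 (A 0)).trans hA'0le
      intro u v hv huv
      have hu : ∀ i, u i < L i := fun i => lt_of_le_of_lt (huv i) (hv i)
      by_cases hu0 : u = 0
      · subst hu0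
        have : v - 0 = v := by funext i; simp
        rw [this]; linarith
      · by_cases huv' : u = v
        · subst huv'
          have : u - u = 0 := by funext i; simp
          rw [this]; linarith
        · have hv0 : v ≠ 0 := by
            rintro rfl
            exact hu0 (funext fun i => Nat.le_zero.mp (huv i))
          have hvu0 : v - u ≠ 0 := by
            obtain ⟨i, hi⟩ := Function.ne_iff.mp huv'
            have h1 : u i < v i := lt_of_le_of_ne (huv i) hi
            intro h
            have : (v - u) i = 0 := by rw [h]; rfl
            have : v i - u i = 0 := this
            omega
          have hvuL : ∀ i, (v - u) i < L i := fun i =>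
            lt_of_le_of_lt (Nat.sub_le _ _) (hv i)
          have key := H u v hv huv
          rw [hA' u hu hu0, hA' v hv hv0, hA' (v - u) hvuL hvu0, hsub u v huv] at key
          linarith
    · intro H
      have h00 : (0 : Fin d → ℕ) - 0 = 0 := by funext i; simp
      have hA0le : A 0 ≤ 0 := by
        have := H 0 0 h0L (fun i => le_refl _)
        rw [h00] at this; linarith
      have hA'00 : A' 0 = 0 := by rw [hA'0]; exact max_eq_left hA0le
      intro u v hv huv
      have hu : ∀ i, u i < L i := fun i => lt_of_le_of_lt (huv i) (hv i)
      by_cases hu0 : u = 0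
      · subst hu0
        have : v - 0 = v := by funext i; simp
        rw [this, hA'00]; linarith
      · by_cases huv' : u = v
        · subst huv'
          have : u - u = 0 := by funext i; simp
          rw [this, hA'00]; linarith
        · have hv0 : v ≠ 0 := by
            rintro rfl
            exact hu0 (funext fun i => Nat.le_zero.mp (huv i))
          have hvu0 : v - u ≠ 0 := by
            obtain ⟨i, hi⟩ := Function.ne_iff.mp huv'
            have h1 : u i < v i := lt_of_le_of_ne (huv i) hi
            intro h
            have : (v - u) i = 0 := by rw [h]; rfl
            have : v i - u i = 0 := this
            omega
          have hvuL : ∀ i, (v - u) i < L i := fun i =>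
            lt_of_le_of_lt (Nat.sub_le _ _) (hv i)
          have key := H u v hv huv
          rw [hA' u hu hu0, hA' v hv hv0, hA' (v - u) hvuL hvu0, hsub u v huv]
          linarith
  · -- (iv)
    intro v hv
    have hsle : (∑ i, (v i : ℤ)) ≤ ∑ i, ((L i : ℤ) - 1) :=
      Finset.sum_le_sum fun i _ => by have := hv i; push_cast; omega
    have hLnn : (0 : ℤ) ≤ ∑ i, ((L i : ℤ) - 1) :=
      Finset.sum_nonneg fun i _ => by have := hL i; push_cast; omega
    by_cases h0 : v = 0
    · subst h0; rw [hA'0]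
      nlinarith
    · rw [hA' v hv h0, hc]
      have hav : A v ≤ W := (le_abs_self _).trans (hbound v hv)
      nlinarith [hsumnn v]
end

section
/- Let A, B, C be d-dimensional arrays of size L, let K = 1 + 2·max over all positions v of max{|A_v|, |B_v|, |C_v|}, and let e denote the first standard unit vector of ℕ^d. Define an array M of size L' = L + 3L₁·e (so L'₁ = 4L₁ and L'_i = L_i for i ≥ 2) by: M_0 = 0; M_v = −10K for every position v of M with v₁ < L₁ and v ≠ 0; and, for every position u ≤ L − 1: M_{L₁·e + u} = K + A_u, M_{2L₁·e + u} = 4K + B_u, and M_{3L₁·e + u} = 5K + C_u. Then M is superadditive if and only if (A ⊕ B)_v ≤ C_v for every position v ≤ L − 1. -/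
/-- reduction from the upper-bound test to superadditivity.
Given arrays `A, B, C` of size `L`, `K = 1 + 2·max_v max{|A v|, |B v|, |C v|}`,
and the compound array `M` of size `L' = L + 3L₁e₁` consisting of a dummy block
(with `M 0 = 0` and value `−10K` elsewhere) followed by the blocks `K + A`,
`4K + B` and `5K + C` stacked along the first dimension, we have:
`M` is superadditive iff `(A ⊕ B) v ≤ C v` for every position `v`. -/
theorem stmt5 (d : ℕ) (hd : 0 < d) (L : Fin d → ℕ) (hL : ∀ i, 1 ≤ L i)
    (A B C : (Fin d → ℕ) → ℤ) (Kmax K : ℤ)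
    (hKmax : IsGreatest {x : ℤ | ∃ v : Fin d → ℕ, (∀ i, v i < L i) ∧
      x = max |A v| (max |B v| |C v|)} Kmax)
    (hK : K = 1 + 2 * Kmax)
    (L' : Fin d → ℕ)
    (hL' : ∀ i, L' i = if i = (⟨0, hd⟩ : Fin d) then 4 * L i else L i)
    (M : (Fin d → ℕ) → ℤ)
    (hM0 : M 0 = 0)
    (hMneg : ∀ v : Fin d → ℕ, (∀ i, v i < L' i) → v ⟨0, hd⟩ < L ⟨0, hd⟩ →
      v ≠ 0 → M v = -10 * K)
    (hMA : ∀ u : Fin d → ℕ, (∀ i, u i < L i) →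
      M (fun i => if i = (⟨0, hd⟩ : Fin d) then L i + u i else u i) = K + A u)
    (hMB : ∀ u : Fin d → ℕ, (∀ i, u i < L i) →
      M (fun i => if i = (⟨0, hd⟩ : Fin d) then 2 * L i + u i else u i) = 4 * K + B u)
    (hMC : ∀ u : Fin d → ℕ, (∀ i, u i < L i) →
      M (fun i => if i = (⟨0, hd⟩ : Fin d) then 3 * L i + u i else u i) = 5 * K + C u) :
    (∀ u v : Fin d → ℕ, (∀ i, v i < L' i) → (∀ i, u i ≤ v i) →
        M u + M (v - u) ≤ M v) ↔
    (∀ u v : Fin d → ℕ, (∀ i, v i < L i) → (∀ i, u i ≤ v i) →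
        A u + B (v - u) ≤ C v) := by
  set e0 : Fin d := ⟨0, hd⟩ with he0
  have hite : ∀ x y : ℕ, (if e0 = e0 then x else y) = x := fun x y => if_pos rfl
  obtain ⟨hmem, hub⟩ := hKmax
  have hKmax0 : 0 ≤ Kmax := by
    obtain ⟨v0, hv0, hv0eq⟩ := hmem
    have h0 : (0:ℤ) ≤ max |A v0| (max |B v0| |C v0|) :=
      le_trans (abs_nonneg _) (le_max_left _ _)
    linarith [hv0eq ▸ h0]
  have habs : ∀ q : Fin d → ℕ, (∀ i, q i < L i) →
      |A q| ≤ Kmax ∧ |B q| ≤ Kmax ∧ |C q| ≤ Kmax := by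
    intro q hq
    have h : max |A q| (max |B q| |C q|) ≤ Kmax := hub ⟨q, hq, rfl⟩
    simp only [max_le_iff] at h
    exact ⟨h.1, h.2.1, h.2.2⟩
  constructor
  · -- superadditive → upper bound test
    intro h u v hv huv
    have hV : ∀ i, (fun i => if i = e0 then 3 * L i + v i else v i) i < L' i := by
      intro i; rw [hL' i]
      by_cases hi : i = e0
      · subst hi; simp only [hite, if_true]; have := hv e0; omega
      · simp only [if_neg hi]; exact hv i
    have hUV : ∀ i, (fun i => if i = e0 then L i + u i else u i) i ≤
        (fun i => if i = e0 then 3 * L i + v i else v i) i := by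
      intro i
      by_cases hi : i = e0
      · subst hi; simp only [hite, if_true]; have := huv e0; omega
      · simp only [if_neg hi]; exact huv i
    have key := h _ _ hV hUV
    have hu : ∀ i, u i < L i := fun i => lt_of_le_of_lt (huv i) (hv i)
    have hMU : M (fun i => if i = e0 then L i + u i else u i) = K + A u := hMA u hu
    have hMV : M (fun i => if i = e0 then 3 * L i + v i else v i) = 5 * K + C v := hMC v hv
    have hVU : ((fun i => if i = e0 then 3 * L i + v i else v i) -
        (fun i => if i = e0 then L i + u i else u i)) =
        (fun i => if i = e0 then 2 * L i + (v - u) i else (v - u) i) := by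
      funext i
      simp only [Pi.sub_apply]
      by_cases hi : i = e0
      · subst hi; simp only [hite, if_true]; have := huv e0; omega
      · simp only [if_neg hi]
    have hvu : ∀ i, (v - u) i < L i := by
      intro i
      have h1 : (v - u) i = v i - u i := rfl
      have := hv i; omega
    have hMVU : M ((fun i => if i = e0 then 3 * L i + v i else v i) -
        (fun i => if i = e0 then L i + u i else u i)) = 4 * K + B (v - u) := by
      rw [hVU]; exact hMB (v - u) hvu
    rw [hMU, hMV, hMVU] at key
    linarith
  · -- upper bound test → superadditive
    intro H u v hv huv
    have hn : 1 ≤ L e0 := hL e0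
    have hc4 : v e0 < 4 * L e0 := by
      have := hv e0; rw [hL' e0, hite] at this; exact this
    have hvi : ∀ i, i ≠ e0 → v i < L i := by
      intro i hi; have := hv i; rwa [hL' i, if_neg hi] at this
    have hvue : (v - u) e0 = v e0 - u e0 := rfl
    have huve : u e0 ≤ v e0 := huv e0
    have hwle : ∀ i, (v - u) i ≤ v i := by
      intro i
      have h1 : (v - u) i = v i - u i := rfl
      omega
    have hui : ∀ i, i ≠ e0 → u i < L i := fun i hi => lt_of_le_of_lt (huv i) (hvi i hi)
    have hwi : ∀ i, i ≠ e0 → (v - u) i < L i := fun i hi => lt_of_le_of_lt (hwle i) (hvi i hi)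
    have hab : u e0 + (v - u) e0 = v e0 := by omega
    -- block evaluation lemmas
    have h0' : ∀ p : Fin d → ℕ, (∀ i, i ≠ e0 → p i < L i) → p e0 < L e0 → p ≠ 0 →
        M p = -10 * K := by
      intro p hp hpe hp0
      refine hMneg p (fun i => ?_) hpe hp0
      rw [hL' i]
      by_cases hi : i = e0
      · subst hi; rw [hite]; omega
      · rw [if_neg hi]; exact hp i hi
    have hA' : ∀ p : Fin d → ℕ, (∀ i, i ≠ e0 → p i < L i) → L e0 ≤ p e0 → p e0 < 2 * L e0 →
        M p = K + A (fun i => if i = e0 then p i - L e0 else p i) ∧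
        -Kmax ≤ A (fun i => if i = e0 then p i - L e0 else p i) ∧
        A (fun i => if i = e0 then p i - L e0 else p i) ≤ Kmax := by
      intro p hp h1 h2
      set q : Fin d → ℕ := fun i => if i = e0 then p i - L e0 else p i with hq
      have hqL : ∀ i, q i < L i := by
        intro i
        by_cases hi : i = e0
        · subst hi; simp only [hq, hite, if_true]; omega
        · simp only [hq, if_neg hi]; exact hp i hi
      have heq : (fun i => if i = e0 then L i + q i else q i) = p := by
        funext i
        by_cases hi : i = e0
        · subst hi; simp only [hq, hite, if_true]; omega
        · simp only [hq, if_neg hi]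
      have hb := abs_le.mp (habs q hqL).1
      exact ⟨by rw [← heq]; exact hMA q hqL, hb.1, hb.2⟩
    have hB' : ∀ p : Fin d → ℕ, (∀ i, i ≠ e0 → p i < L i) → 2 * L e0 ≤ p e0 → p e0 < 3 * L e0 →
        M p = 4 * K + B (fun i => if i = e0 then p i - 2 * L e0 else p i) ∧
        -Kmax ≤ B (fun i => if i = e0 then p i - 2 * L e0 else p i) ∧
        B (fun i => if i = e0 then p i - 2 * L e0 else p i) ≤ Kmax := by
      intro p hp h1 h2
      set q : Fin d → ℕ := fun i => if i = e0 then p i - 2 * L e0 else p i with hq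
      have hqL : ∀ i, q i < L i := by
        intro i
        by_cases hi : i = e0
        · subst hi; simp only [hq, hite, if_true]; omega
        · simp only [hq, if_neg hi]; exact hp i hi
      have heq : (fun i => if i = e0 then 2 * L i + q i else q i) = p := by
        funext i
        by_cases hi : i = e0
        · subst hi; simp only [hq, hite, if_true]; omega
        · simp only [hq, if_neg hi]
      have hb := abs_le.mp (habs q hqL).2.1
      exact ⟨by rw [← heq]; exact hMB q hqL, hb.1, hb.2⟩
    have hC' : ∀ p : Fin d → ℕ, (∀ i, i ≠ e0 → p i < L i) → 3 * L e0 ≤ p e0 → p e0 < 4 * L e0 →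
        M p = 5 * K + C (fun i => if i = e0 then p i - 3 * L e0 else p i) ∧
        -Kmax ≤ C (fun i => if i = e0 then p i - 3 * L e0 else p i) ∧
        C (fun i => if i = e0 then p i - 3 * L e0 else p i) ≤ Kmax := by
      intro p hp h1 h2
      set q : Fin d → ℕ := fun i => if i = e0 then p i - 3 * L e0 else p i with hq
      have hqL : ∀ i, q i < L i := by
        intro i
        by_cases hi : i = e0
        · subst hi; simp only [hq, hite, if_true]; omega
        · simp only [hq, if_neg hi]; exact hp i hi
      have heq : (fun i => if i = e0 then 3 * L i + q i else q i) = p := by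
        funext i
        by_cases hi : i = e0
        · subst hi; simp only [hq, hite, if_true]; omega
        · simp only [hq, if_neg hi]
      have hb := abs_le.mp (habs q hqL).2.2
      exact ⟨by rw [← heq]; exact hMC q hqL, hb.1, hb.2⟩
    -- trivial cases
    by_cases hu0 : u = 0
    · have hveq : v - u = v := by
        funext i
        have h1 : (v - u) i = v i - u i := rfl
        have h2 : u i = 0 := by rw [hu0]; rfl
        omega
      rw [hveq, hu0, hM0]; simp
    by_cases hw0 : v - u = 0
    · have huv' : u = v := by
        funext i
        have h1 := congrFun hw0 i
        have h2 : (v - u) i = v i - u i := rfl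
        have h3 := huv i
        simp only [Pi.zero_apply] at h1
        omega
      rw [hw0, hM0, huv']; simp
    have hv0 : v ≠ 0 := by
      intro h
      apply hu0
      funext i
      have h1 := congrFun h i
      have h2 := huv i
      simp only [Pi.zero_apply] at h1 ⊢
      omega
    -- main case analysis on blocks
    rcases Nat.lt_or_ge (u e0) (L e0) with ha | ha
    · -- u in dummy block, M u = -10K
      have hMu : M u = -10 * K := h0' u hui ha hu0
      rcases Nat.lt_or_ge ((v - u) e0) (L e0) with hb | hb
      · have hMw : M (v - u) = -10 * K := h0' _ hwi hb hw0
        rcases Nat.lt_or_ge (v e0) (L e0) with hcv | hcv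
        · have hMv : M v = -10 * K := h0' v hvi hcv hv0
          rw [hMu, hMw, hMv]; linarith
        · obtain ⟨hMv, hv1, hv2⟩ := hA' v hvi hcv (by omega)
          rw [hMu, hMw, hMv]; linarith
      · rcases Nat.lt_or_ge ((v - u) e0) (2 * L e0) with hb2 | hb2
        · obtain ⟨hMw, hw1, hw2⟩ := hA' _ hwi hb hb2
          rcases Nat.lt_or_ge (v e0) (2 * L e0) with hcv | hcv
          · obtain ⟨hMv, hv1, hv2⟩ := hA' v hvi (by omega) hcv
            rw [hMu, hMw, hMv]; linarith
          · obtain ⟨hMv, hv1, hv2⟩ := hB' v hvi hcv (by omega)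
            rw [hMu, hMw, hMv]; linarith
        · rcases Nat.lt_or_ge ((v - u) e0) (3 * L e0) with hb3 | hb3
          · obtain ⟨hMw, hw1, hw2⟩ := hB' _ hwi hb2 hb3
            rcases Nat.lt_or_ge (v e0) (3 * L e0) with hcv | hcv
            · obtain ⟨hMv, hv1, hv2⟩ := hB' v hvi (by omega) hcv
              rw [hMu, hMw, hMv]; linarith
            · obtain ⟨hMv, hv1, hv2⟩ := hC' v hvi hcv (by omega)
              rw [hMu, hMw, hMv]; linarith
          · obtain ⟨hMw, hw1, hw2⟩ := hC' _ hwi hb3 (by omega)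
            obtain ⟨hMv, hv1, hv2⟩ := hC' v hvi (by omega) hc4
            rw [hMu, hMw, hMv]; linarith
    · rcases Nat.lt_or_ge (u e0) (2 * L e0) with ha2 | ha2
      · -- u in A block
        obtain ⟨hMu, hu1, hu2⟩ := hA' u hui ha ha2
        rcases Nat.lt_or_ge ((v - u) e0) (L e0) with hb | hb
        · have hMw : M (v - u) = -10 * K := h0' _ hwi hb hw0
          rcases Nat.lt_or_ge (v e0) (2 * L e0) with hcv | hcv
          · obtain ⟨hMv, hv1, hv2⟩ := hA' v hvi (by omega) hcv
            rw [hMu, hMw, hMv]; linarith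
          · obtain ⟨hMv, hv1, hv2⟩ := hB' v hvi hcv (by omega)
            rw [hMu, hMw, hMv]; linarith
        · rcases Nat.lt_or_ge ((v - u) e0) (2 * L e0) with hb2 | hb2
          · obtain ⟨hMw, hw1, hw2⟩ := hA' _ hwi hb hb2
            rcases Nat.lt_or_ge (v e0) (3 * L e0) with hcv | hcv
            · obtain ⟨hMv, hv1, hv2⟩ := hB' v hvi (by omega) hcv
              rw [hMu, hMw, hMv]; linarith
            · obtain ⟨hMv, hv1, hv2⟩ := hC' v hvi hcv (by omega)
              rw [hMu, hMw, hMv]; linarith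
          · rcases Nat.lt_or_ge ((v - u) e0) (3 * L e0) with hb3 | hb3
            · -- CORE case: u in A block, v-u in B block, v in C block
              obtain ⟨hMw, hw1, hw2⟩ := hB' _ hwi hb2 hb3
              obtain ⟨hMv, hv1, hv2⟩ := hC' v hvi (by omega) hc4
              have hrv : ∀ i, (fun i => if i = e0 then v i - 3 * L e0 else v i) i < L i := by
                intro i
                by_cases hi : i = e0
                · subst hi; simp only [hite, if_true]; omega
                · simp only [if_neg hi]; exact hvi i hi
              have hru : ∀ i, (fun i => if i = e0 then u i - L e0 else u i) i ≤
                  (fun i => if i = e0 then v i - 3 * L e0 else v i) i := by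
                intro i
                by_cases hi : i = e0
                · subst hi; simp only [hite, if_true]; omega
                · simp only [if_neg hi]; exact huv i
              have hkey := H _ _ hrv hru
              have hsub : ((fun i => if i = e0 then v i - 3 * L e0 else v i) -
                  (fun i => if i = e0 then u i - L e0 else u i)) =
                  (fun i => if i = e0 then (v - u) i - 2 * L e0 else (v - u) i) := by
                funext i
                have h1 : (v - u) i = v i - u i := rfl
                simp only [Pi.sub_apply]
                by_cases hi : i = e0
                · subst hi; simp only [hite, if_true]; omega
                · simp only [if_neg hi]
              rw [hsub] at hkey
              rw [hMu, hMw, hMv]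
              linarith
            · exfalso; omega
      · rcases Nat.lt_or_ge (u e0) (3 * L e0) with ha3 | ha3
        · -- u in B block
          obtain ⟨hMu, hu1, hu2⟩ := hB' u hui ha2 ha3
          rcases Nat.lt_or_ge ((v - u) e0) (L e0) with hb | hb
          · have hMw : M (v - u) = -10 * K := h0' _ hwi hb hw0
            rcases Nat.lt_or_ge (v e0) (3 * L e0) with hcv | hcv
            · obtain ⟨hMv, hv1, hv2⟩ := hB' v hvi (by omega) hcv
              rw [hMu, hMw, hMv]; linarith
            · obtain ⟨hMv, hv1, hv2⟩ := hC' v hvi hcv (by omega)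
              rw [hMu, hMw, hMv]; linarith
          · rcases Nat.lt_or_ge ((v - u) e0) (2 * L e0) with hb2 | hb2
            · -- CORE case (mirrored): v-u in A block, u in B block, v in C block
              obtain ⟨hMw, hw1, hw2⟩ := hA' _ hwi hb hb2
              obtain ⟨hMv, hv1, hv2⟩ := hC' v hvi (by omega) hc4
              have hrv : ∀ i, (fun i => if i = e0 then v i - 3 * L e0 else v i) i < L i := by
                intro i
                by_cases hi : i = e0
                · subst hi; simp only [hite, if_true]; omega
                · simp only [if_neg hi]; exact hvi i hi
              have hru : ∀ i, (fun i => if i = e0 then (v - u) i - L e0 else (v - u) i) i ≤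
                  (fun i => if i = e0 then v i - 3 * L e0 else v i) i := by
                intro i
                have h1 : (v - u) i = v i - u i := rfl
                by_cases hi : i = e0
                · subst hi; simp only [hite, if_true]; omega
                · simp only [if_neg hi]; exact hwle i
              have hkey := H _ _ hrv hru
              have hsub : ((fun i => if i = e0 then v i - 3 * L e0 else v i) -
                  (fun i => if i = e0 then (v - u) i - L e0 else (v - u) i)) =
                  (fun i => if i = e0 then u i - 2 * L e0 else u i) := by
                funext i
                have h1 : (v - u) i = v i - u i := rfl
                have h2 := huv i
                simp only [Pi.sub_apply]
                by_cases hi : i = e0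
                · subst hi; simp only [hite, if_true]; omega
                · simp only [if_neg hi]; omega
              rw [hsub] at hkey
              rw [hMu, hMw, hMv]
              linarith
            · exfalso; omega
        · -- u in C block; v-u must be in dummy block
          obtain ⟨hMu, hu1, hu2⟩ := hC' u hui ha3 (by omega)
          have hb : (v - u) e0 < L e0 := by omega
          have hMw : M (v - u) = -10 * K := h0' _ hwi hb hw0
          obtain ⟨hMv, hv1, hv2⟩ := hC' v hvi (by omega) hc4
          rw [hMu, hMw, hMv]; linarith
end

section
/- Let I be a finite set of items, where item i has weight vector w(i) ∈ ℕ^d, profit p_i ∈ ℤ, and multiplicity bound u_i ∈ ℕ. For J ⊆ I and v ∈ ℕ^d let G(J, v) ∈ ℤ ∪ {−∞} be the maximum of ∑_{i∈J} x_i·p_i over all x ∈ ℕ^J with x_i ≤ u_i for all i ∈ J and ∑_{i∈J} x_i·w(i) = v (and G(J, v) = −∞ if no such x exists). Fix w ∈ ℕ^d, let J_w = {i ∈ I : w(i) = w} and J = I \ J_w, and let f(k) ∈ ℤ ∪ {−∞} be the maximum of ∑_{i∈J_w} x_i·p_i over x ∈ ℕ^{J_w} with x_i ≤ u_i and ∑_{i∈J_w}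 x_i = k. Then for every v ∈ ℕ^d: G(I, v) = max over k ∈ ℕ with k·w ≤ v componentwise and k ≤ ∑_{i∈J_w} u_i of ( G(J, v − k·w) + f(k) ), where addition with −∞ yields −∞. -/
lemma setFinite_aux {N : ℕ} (u : Fin N → ℕ) (g : (Fin N → ℕ) → EReal)
    (S : Set EReal) (hS : ∀ z ∈ S, ∃ x : Fin N → ℕ, (∀ i, x i ≤ u i) ∧ z = g x) :
    S.Finite := by
  have h1 : {x : Fin N → ℕ | ∀ i, x i ≤ u i}.Finite := by
    have h2 := Set.Finite.pi (fun i : Fin N => Set.finite_Iic (u i))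
    refine h2.subset ?_
    intro x hx
    exact fun i _ => hx i
  refine (h1.image g).subset ?_
  intro z hz
  obtain ⟨x, hx, rfl⟩ := hS z hz
  exact ⟨x, hx, rfl⟩

/-- recurrence for bounded knapsack, grouping items of a fixed
weight.  Items `i : Fin N` have weights `w i ∈ ℕ^d`, profits `p i ∈ ℤ` and
multiplicity bounds `u i`.  `G J v` is the best profit using only items of `J`
with multiplicities `≤ u` and total weight exactly `v` (`⊥ = −∞` if
infeasible), and for a fixed weight `wt`, `f k` is the best profit of exactly
`k` items of weight `wt` (with multiplicities `≤ u`).  With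
`Jw = {i | w i = wt}` and `J = I \ Jw`:
`G I v = max { G J (v − k·wt) + f k | k·wt ≤ v, k ≤ ∑_{i ∈ Jw} u i }`. -/
theorem stmt7 (d N : ℕ) (w : Fin N → Fin d → ℕ) (p : Fin N → ℤ) (u : Fin N → ℕ)
    (wt : Fin d → ℕ)
    (Jw J : Finset (Fin N))
    (hJw : Jw = Finset.univ.filter (fun i => w i = wt))
    (hJ : J = Finset.univ \ Jw)
    (G : Finset (Fin N) → (Fin d → ℕ) → EReal)
    (hG : ∀ (J' : Finset (Fin N)) (v : Fin d → ℕ),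
      G J' v = sSup {z : EReal | ∃ x : Fin N → ℕ,
        (∀ i, x i ≤ u i) ∧ (∀ i, i ∉ J' → x i = 0) ∧
        (∀ j, ∑ i, x i * w i j = v j) ∧
        z = (((∑ i, (x i : ℤ) * p i : ℤ) : ℝ) : EReal)})
    (f : ℕ → EReal)
    (hf : ∀ k : ℕ, f k = sSup {z : EReal | ∃ x : Fin N → ℕ,
        (∀ i, x i ≤ u i) ∧ (∀ i, i ∉ Jw → x i = 0) ∧
        (∑ i, x i) = k ∧
        z = (((∑ i, (x i : ℤ) * p i : ℤ) : ℝ) : EReal)})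
    (v : Fin d → ℕ) :
    G Finset.univ v = sSup {z : EReal | ∃ k : ℕ,
      (∀ j, k * wt j ≤ v j) ∧ k ≤ ∑ i ∈ Jw, u i ∧
      z = G J (fun j => v j - k * wt j) + f k} := by
  subst hJw hJ
  rw [hG]
  apply le_antisymm
  · -- ≤ direction
    apply sSup_le
    rintro z ⟨x, hxu, -, hxw, rfl⟩
    set xw : Fin N → ℕ := fun i => if w i = wt then x i else 0 with hxwdef
    set xJ : Fin N → ℕ := fun i => if w i = wt then 0 else x i with hxJdef
    set k := ∑ i, xw i with hk
    have hsplit : ∀ i, x i = xJ i + xw i := by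
      intro i; by_cases h : w i = wt <;> simp [xw, xJ, h]
    have hxwle : ∀ i, xw i ≤ x i := fun i => by
      rw [hsplit i]; exact Nat.le_add_left _ _
    have hxJle : ∀ i, xJ i ≤ x i := fun i => by
      rw [hsplit i]; exact Nat.le_add_right _ _
    have hwsum : ∀ j, ∑ i, xw i * w i j = k * wt j := by
      intro j
      rw [hk, Finset.sum_mul]
      refine Finset.sum_congr rfl fun i _ => ?_
      by_cases h : w i = wt <;> simp [xw, h]
    have hsumsplit : ∀ j, ∑ i, xJ i * w i j + k * wt j = v j := by
      intro j
      rw [← hwsum j, ← Finset.sum_add_distrib, ← hxw j]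
      refine Finset.sum_congr rfl fun i _ => ?_
      rw [← add_mul, ← hsplit i]
    have hkle : ∀ j, k * wt j ≤ v j := fun j => by
      rw [← hsumsplit j]; exact Nat.le_add_left _ _
    have hkub : k ≤ ∑ i ∈ Finset.univ.filter (fun i => w i = wt), u i := by
      have : k = ∑ i ∈ Finset.univ.filter (fun i => w i = wt), x i := by
        rw [hk, Finset.sum_filter]
      rw [this]
      exact Finset.sum_le_sum fun i _ => hxu i
    refine le_sSup_of_le ⟨k, hkle, hkub, rfl⟩ ?_
    have hint : (∑ i, (x i : ℤ) * p i) = (∑ i, (xJ i : ℤ) * p i) + (∑ i, (xw i : ℤ) * p i) := by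
      rw [← Finset.sum_add_distrib]
      refine Finset.sum_congr rfl fun i _ => ?_
      have h := hsplit i
      have h' : (x i : ℤ) = (xJ i : ℤ) + (xw i : ℤ) := by exact_mod_cast h
      rw [h']; ring
    have hzsplit : (((∑ i, (x i : ℤ) * p i : ℤ) : ℝ) : EReal)
        = (((∑ i, (xJ i : ℤ) * p i : ℤ) : ℝ) : EReal)
          + (((∑ i, (xw i : ℤ) * p i : ℤ) : ℝ) : EReal) := by
      rw [hint, Int.cast_add, EReal.coe_add]
    rw [hzsplit]
    refine add_le_add ?_ ?_
    · rw [hG]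
      apply le_sSup
      refine ⟨xJ, fun i => (hxJle i).trans (hxu i), ?_, ?_, rfl⟩
      · intro i hi
        simp only [Finset.mem_sdiff, Finset.mem_univ, Finset.mem_filter, true_and,
          not_and, not_not] at hi
        simp [xJ, hi]
      · intro j
        have := hsumsplit j
        omega
    · rw [hf]
      apply le_sSup
      refine ⟨xw, fun i => (hxwle i).trans (hxu i), ?_, rfl, rfl⟩
      intro i hi
      simp only [Finset.mem_filter, Finset.mem_univ, true_and] at hi
      simp [xw, hi]
  · -- ≥ direction
    apply sSup_le
    rintro z ⟨k, hkle, hkub, rfl⟩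
    rw [hG, hf]
    set A := {z : EReal | ∃ x : Fin N → ℕ,
        (∀ i, x i ≤ u i) ∧ (∀ i, i ∉ Finset.univ \ Finset.univ.filter (fun i => w i = wt) → x i = 0) ∧
        (∀ j, ∑ i, x i * w i j = (fun j => v j - k * wt j) j) ∧
        z = (((∑ i, (x i : ℤ) * p i : ℤ) : ℝ) : EReal)} with hA
    set B := {z : EReal | ∃ x : Fin N → ℕ,
        (∀ i, x i ≤ u i) ∧ (∀ i, i ∉ Finset.univ.filter (fun i => w i = wt) → x i = 0) ∧
        (∑ i, x i) = k ∧
        z = (((∑ i, (x i : ℤ) * p i : ℤ) : ℝ) : EReal)} with hB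
    rcases A.eq_empty_or_nonempty with hAe | hAne
    · rw [hAe, sSup_empty, EReal.bot_add]; exact bot_le
    rcases B.eq_empty_or_nonempty with hBe | hBne
    · rw [hBe, sSup_empty, EReal.add_bot]; exact bot_le
    have hAfin : A.Finite := by
      refine setFinite_aux u (fun x => (((∑ i, (x i : ℤ) * p i : ℤ) : ℝ) : EReal)) A ?_
      rintro z ⟨x, hx, -, -, rfl⟩; exact ⟨x, hx, rfl⟩
    have hBfin : B.Finite := by
      refine setFinite_aux u (fun x => (((∑ i, (x i : ℤ) * p i : ℤ) : ℝ) : EReal)) B ?_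
      rintro z ⟨x, hx, -, -, rfl⟩; exact ⟨x, hx, rfl⟩
    obtain ⟨x₁, hx1u, hx1s, hx1w, hx1z⟩ := hAne.csSup_mem hAfin
    obtain ⟨x₂, hx2u, hx2s, hx2k, hx2z⟩ := hBne.csSup_mem hBfin
    have hx1s' : ∀ i, w i = wt → x₁ i = 0 := by
      intro i hi
      refine hx1s i ?_
      simp [hi]
    have hx2s' : ∀ i, ¬ w i = wt → x₂ i = 0 := by
      intro i hi
      refine hx2s i ?_
      simp [hi]
    rw [hx1z, hx2z, ← EReal.coe_add, ← Int.cast_add]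
    apply le_sSup
    refine ⟨fun i => x₁ i + x₂ i, ?_, fun i hi => absurd (Finset.mem_univ i) hi, ?_, ?_⟩
    · intro i
      show x₁ i + x₂ i ≤ u i
      by_cases h : w i = wt
      · rw [hx1s' i h]; simpa using hx2u i
      · rw [hx2s' i h]; simpa using hx1u i
    · intro j
      have h2 : ∑ i, x₂ i * w i j = k * wt j := by
        rw [← hx2k, Finset.sum_mul]
        refine Finset.sum_congr rfl fun i _ => ?_
        by_cases h : w i = wt
        · rw [h]
        · rw [hx2s' i h]; ring
      have h1 : ∑ i, x₁ i * w i j = v j - k * wt j := by simpa using hx1w j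
      calc ∑ i, (x₁ i + x₂ i) * w i j
          = ∑ i, x₁ i * w i j + ∑ i, x₂ i * w i j := by
            rw [← Finset.sum_add_distrib]
            exact Finset.sum_congr rfl fun i _ => by ring
        _ = v j := by rw [h1, h2]; have := hkle j; omega
    · have hint : (∑ i, (x₁ i : ℤ) * p i) + (∑ i, (x₂ i : ℤ) * p i)
          = ∑ i, (((fun i => x₁ i + x₂ i) i : ℕ) : ℤ) * p i := by
        rw [← Finset.sum_add_distrib]
        refine Finset.sum_congr rfl fun i _ => ?_
        push_cast
        ring
      exact congrArg (fun t : ℤ => ((t : ℝ) : EReal)) hint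
end

section
/- Let L ∈ ℕ^d with L_i ≥ 1 for all i, let A and B be d-dimensional arrays of size L with integer entries, and define φ : ℕ^d → ℕ by φ(v) = ∑_{i=1}^d v_i · ∏_{m=1}^{i−1} (2L_m − 1). Define sequences a, b indexed by m ∈ ℕ with values in ℤ ∪ {−∞} by a_m = A_v if m = φ(v) for some position v ≤ L − 1 and a_m = −∞ otherwise, and analogously b from B. Then for every position v ≤ L − 1: (A ⊕ B)_v = max_{0 ≤ m ≤ φ(v)} ( a_m + b_{φ(v)−m} ), where addition with −∞ yields −∞. (That is, the d-dimensional (max,+)-convolution can be read off from the one-dimensional (max,+)-convolution of the linearized, padded sequences.) -/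
theorem Iio_castSucc' (n : ℕ) (i : Fin n) :
    Finset.Iio i.castSucc = (Finset.Iio i).map Fin.castSuccOrderEmb.toEmbedding := by
  ext x
  simp only [Finset.mem_Iio, Finset.mem_map, Fin.castSuccOrderEmb, RelEmbedding.coe_toEmbedding]
  constructor
  · intro hx
    have hx' : x.val < i.val := by simpa [Fin.lt_def] using hx
    have hxn : x.val < n := hx'.trans i.isLt
    refine ⟨⟨x.val, hxn⟩, ?_, ?_⟩
    · simpa [Fin.lt_def] using hx'
    · ext; simp
  · rintro ⟨y, hy, rfl⟩
    exact Fin.castSucc_lt_castSucc_iff.mpr hy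

theorem Iio_last' (n : ℕ) :
    Finset.Iio (Fin.last n) = (Finset.univ : Finset (Fin n)).map Fin.castSuccOrderEmb.toEmbedding := by
  ext x
  simp only [Finset.mem_Iio, Finset.mem_map, Fin.castSuccOrderEmb, RelEmbedding.coe_toEmbedding,
    Finset.mem_univ, true_and]
  constructor
  · intro hx
    have hxn : x.val < n := by simpa [Fin.lt_def] using hx
    exact ⟨⟨x.val, hxn⟩, by ext; simp⟩
  · rintro ⟨y, rfl⟩
    exact Fin.castSucc_lt_last y

theorem mixed_sum_lt (d : ℕ) (b : Fin d → ℕ) (x : Fin d → ℕ) (hx : ∀ i, x i < b i) :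
    ∑ i, x i * ∏ m ∈ Finset.Iio i, b m < ∏ i, b i := by
  induction d with
  | zero => simp
  | succ n ih =>
    have key : ∀ i : Fin n, ∏ m ∈ Finset.Iio i.castSucc, b m
        = ∏ m ∈ Finset.Iio i, b m.castSucc := by
      intro i
      rw [Iio_castSucc', Finset.prod_map]
      rfl
    have hQ : ∏ m ∈ Finset.Iio (Fin.last n), b m = ∏ i : Fin n, b i.castSucc := by
      rw [Iio_last', Finset.prod_map]; rfl
    rw [Fin.sum_univ_castSucc, Fin.prod_univ_castSucc]
    have hS := ih (fun i => b i.castSucc) (fun i => x i.castSucc) (fun i => hx i.castSucc)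
    calc (∑ i : Fin n, x i.castSucc * ∏ m ∈ Finset.Iio i.castSucc, b m)
          + x (Fin.last n) * ∏ m ∈ Finset.Iio (Fin.last n), b m
        < (∏ i : Fin n, b i.castSucc) + x (Fin.last n) * ∏ i : Fin n, b i.castSucc := by
          rw [hQ]
          apply Nat.add_lt_add_right
          calc ∑ i : Fin n, x i.castSucc * ∏ m ∈ Finset.Iio i.castSucc, b m
              = ∑ i : Fin n, x i.castSucc * ∏ m ∈ Finset.Iio i, b m.castSucc := by
                exact Finset.sum_congr rfl fun i _ => by rw [key]
            _ < ∏ i : Fin n, b i.castSucc := hS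
      _ = (x (Fin.last n) + 1) * ∏ i : Fin n, b i.castSucc := by ring
      _ ≤ b (Fin.last n) * ∏ i : Fin n, b i.castSucc :=
          Nat.mul_le_mul_right _ (hx (Fin.last n))
      _ = (∏ i : Fin n, b i.castSucc) * b (Fin.last n) := by ring

theorem mixed_inj (d : ℕ) (b : Fin d → ℕ) (hb : ∀ i, 1 ≤ b i) (x y : Fin d → ℕ)
    (hx : ∀ i, x i < b i) (hy : ∀ i, y i < b i)
    (h : ∑ i, x i * ∏ m ∈ Finset.Iio i, b m = ∑ i, y i * ∏ m ∈ Finset.Iio i, b m) :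
    x = y := by
  induction d with
  | zero => funext i; exact absurd i.isLt (Nat.not_lt_zero _)
  | succ n ih =>
    have key : ∀ (z : Fin (n+1) → ℕ) (i : Fin n), z i.castSucc * ∏ m ∈ Finset.Iio i.castSucc, b m
        = z i.castSucc * ∏ m ∈ Finset.Iio i, b m.castSucc := by
      intro z i
      rw [Iio_castSucc', Finset.prod_map]
      rfl
    have hQ : ∏ m ∈ Finset.Iio (Fin.last n), b m = ∏ i : Fin n, b i.castSucc := by
      rw [Iio_last', Finset.prod_map]; rfl
    set Q := ∏ i : Fin n, b i.castSucc with hQdef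
    have hQpos : 0 < Q := Finset.prod_pos fun i _ => hb i.castSucc
    have hSx : ∑ i : Fin n, x i.castSucc * ∏ m ∈ Finset.Iio i, b m.castSucc < Q :=
      mixed_sum_lt n _ _ (fun i => hx i.castSucc)
    have hSy : ∑ i : Fin n, y i.castSucc * ∏ m ∈ Finset.Iio i, b m.castSucc < Q :=
      mixed_sum_lt n _ _ (fun i => hy i.castSucc)
    rw [Fin.sum_univ_castSucc, Fin.sum_univ_castSucc] at h
    simp only [key x, key y, hQ, ← hQdef] at h
    set Sx := ∑ i : Fin n, x i.castSucc * ∏ m ∈ Finset.Iio i, b m.castSucc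
    set Sy := ∑ i : Fin n, y i.castSucc * ∏ m ∈ Finset.Iio i, b m.castSucc
    have hl : x (Fin.last n) = y (Fin.last n) := by
      have h1 : (Sx + x (Fin.last n) * Q) / Q = x (Fin.last n) := by
        rw [Nat.add_mul_div_right _ _ hQpos, Nat.div_eq_of_lt hSx, Nat.zero_add]
      have h2 : (Sy + y (Fin.last n) * Q) / Q = y (Fin.last n) := by
        rw [Nat.add_mul_div_right _ _ hQpos, Nat.div_eq_of_lt hSy, Nat.zero_add]
      rw [← h1, ← h2, h]
    have hS : Sx = Sy := by
      have := h
      rw [hl] at this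
      omega
    have hcast : (fun i : Fin n => x i.castSucc) = (fun i : Fin n => y i.castSucc) :=
      ih (fun i : Fin n => b i.castSucc) (fun i => hb i.castSucc) (fun i => x i.castSucc) (fun i => y i.castSucc)
        (fun i => hx i.castSucc) (fun i => hy i.castSucc) hS
    funext i
    refine Fin.lastCases hl (fun j => ?_) i
    exact congrFun hcast j

/-- `d`-dimensional (max,+)-convolution via the linearized,
padded one-dimensional sequences.  With `φ v = ∑_i v i · ∏_{m<i} (2 L m − 1)`
and sequences `a, b : ℕ → EReal` defined by `a (φ v) = A v` for positions `v`
and `a m = −∞` for `m` not of the form `φ v` (likewise `b` from `B`), we have,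
for every position `v`:
`(A ⊕ B) v = max_{0 ≤ m ≤ φ v} (a m + b (φ v − m))`. -/
theorem stmt11 (d : ℕ) (L : Fin d → ℕ) (hL : ∀ i, 1 ≤ L i)
    (A B : (Fin d → ℕ) → ℤ)
    (φ : (Fin d → ℕ) → ℕ)
    (hφ : ∀ v : Fin d → ℕ, φ v = ∑ i, v i * ∏ m ∈ Finset.Iio i, (2 * L m - 1))
    (a b : ℕ → EReal)
    (haA : ∀ v : Fin d → ℕ, (∀ i, v i < L i) → a (φ v) = ((A v : ℝ) : EReal))
    (haBot : ∀ m : ℕ, (∀ v : Fin d → ℕ, (∀ i, v i < L i) → φ v ≠ m) → a m = ⊥)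
    (hbB : ∀ v : Fin d → ℕ, (∀ i, v i < L i) → b (φ v) = ((B v : ℝ) : EReal))
    (hbBot : ∀ m : ℕ, (∀ v : Fin d → ℕ, (∀ i, v i < L i) → φ v ≠ m) → b m = ⊥)
    (v : Fin d → ℕ) (hv : ∀ i, v i < L i) :
    sSup {z : EReal | ∃ u : Fin d → ℕ, (∀ i, u i ≤ v i) ∧
        z = (((A u + B (v - u) : ℤ) : ℝ) : EReal)}
      = sSup {z : EReal | ∃ m : ℕ, m ≤ φ v ∧ z = a m + b (φ v - m)} := by
  have hφadd : ∀ u w : Fin d → ℕ, φ (fun i => u i + w i) = φ u + φ w := by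
    intro u w
    simp only [hφ, add_mul, Finset.sum_add_distrib]
  apply le_antisymm
  · apply sSup_le
    rintro z ⟨u, hu, rfl⟩
    have hu' : ∀ i, u i < L i := fun i => lt_of_le_of_lt (hu i) (hv i)
    have hw' : ∀ i, (v - u) i < L i := by
      intro i
      simp only [Pi.sub_apply]
      exact lt_of_le_of_lt (Nat.sub_le _ _) (hv i)
    have hsum : φ u + φ (v - u) = φ v := by
      rw [← hφadd]
      congr 1
      funext i
      simp only [Pi.sub_apply]
      exact Nat.add_sub_cancel' (hu i)
    apply le_sSup
    refine ⟨φ u, by omega, ?_⟩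
    rw [show φ v - φ u = φ (v - u) by omega, haA u hu', hbB _ hw']
    push_cast
    rfl
  · apply sSup_le
    rintro z ⟨m, hm, rfl⟩
    by_cases hA : ∃ u : Fin d → ℕ, (∀ i, u i < L i) ∧ φ u = m
    · by_cases hB : ∃ w : Fin d → ℕ, (∀ i, w i < L i) ∧ φ w = φ v - m
      · obtain ⟨u, hu, hum⟩ := hA
        obtain ⟨w, hw, hwm⟩ := hB
        have hsum : φ u + φ w = φ v := by omega
        have heq : (fun i => u i + w i) = v := by
          refine mixed_inj d (fun i => 2 * L i - 1) ?_ _ _ ?_ ?_ ?_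
          · intro i
            show 1 ≤ 2 * L i - 1
            have := hL i; omega
          · intro i
            show u i + w i < 2 * L i - 1
            have := hL i; have := hu i; have := hw i; omega
          · intro i
            show v i < 2 * L i - 1
            have := hL i; have := hv i; omega
          · rw [← hφ, ← hφ, hφadd]
            exact hsum
        have huv : ∀ i, u i ≤ v i := by
          intro i
          have := congrFun heq i
          replace this : u i + w i = v i := this
          omega
        have hvuw : v - u = w := by
          funext i
          have := congrFun heq i
          simp only [Pi.sub_apply] at this ⊢
          omega
        apply le_sSup
        refine ⟨u, huv, ?_⟩
        rw [← hwm, ← hum, haA u hu, hbB w hw, hvuw]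
        push_cast
        rfl
      · push_neg at hB
        rw [hbBot _ fun w hw => hB w hw, EReal.add_bot]
        exact bot_le
    · push_neg at hA
      rw [haBot _ fun u hu => hA u hu, EReal.bot_add]
      exact bot_le
end

section
/- Let A ∈ ℤ^{d×n}, b ∈ ℤ^d, c ∈ ℤ^n, u ∈ ℕ^n, and suppose the feasible set F = {x ∈ ℕ^n : Ax = b, x ≤ u componentwise} is nonempty. Then there exists x* ∈ F maximizing cᵀx over F such that for all indices i, j ∈ [n] with identical columns A_i = A_j and with (c_i, i) lexicographically greater than (c_j, j) (i.e. c_i > c_j, or c_i = c_j and i > j): if x*_j > 0 then x*_i = u_i. -/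
/-- existence of a structured optimal ILP solution.  If the
feasible set `F = {x ∈ ℕ^n | Ax = b, x ≤ u}` is nonempty, then there is an
optimal solution `x*` such that for any indices `i, j` with equal columns
`A_i = A_j` and `(c i, i)` lexicographically greater than `(c j, j)`:
`x* j > 0` implies `x* i = u i`. -/
theorem stmt14 (d n : ℕ) (A : Matrix (Fin d) (Fin n) ℤ) (b : Fin d → ℤ)
    (c : Fin n → ℤ) (u : Fin n → ℕ)
    (hne : ∃ x : Fin n → ℕ,
      (∀ j, ∑ i, A j i * (x i : ℤ) = b j) ∧ ∀ i, x i ≤ u i) :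
    ∃ x : Fin n → ℕ,
      ((∀ j, ∑ i, A j i * (x i : ℤ) = b j) ∧ ∀ i, x i ≤ u i) ∧
      (∀ y : Fin n → ℕ,
        ((∀ j, ∑ i, A j i * (y i : ℤ) = b j) ∧ ∀ i, y i ≤ u i) →
        ∑ i, (y i : ℤ) * c i ≤ ∑ i, (x i : ℤ) * c i) ∧
      (∀ i j : Fin n, (∀ r, A r i = A r j) →
        (c j < c i ∨ (c i = c j ∧ j < i)) → 0 < x j → x i = u i) := by
  classical
  set S : ℤ := ∑ i : Fin n, (i.val : ℤ) * u i with hS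
  have hS0 : 0 ≤ S := Finset.sum_nonneg fun i _ => by positivity
  set g : (Fin n → ℕ) → ℤ :=
    fun x => (S + 1) * (∑ i, (x i : ℤ) * c i) + ∑ i : Fin n, (i.val : ℤ) * x i with hg
  set F : Set (Fin n → ℕ) :=
    {x | (∀ j, ∑ i, A j i * (x i : ℤ) = b j) ∧ ∀ i, x i ≤ u i} with hF
  have hFfin : F.Finite := by
    apply Set.Finite.subset
      (Set.Finite.pi (fun i : Fin n => Set.finite_Iic (u i)))
    intro x hx
    simp only [Set.mem_pi, Set.mem_Iic, Set.mem_univ, forall_true_left]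
    intro i
    exact hx.2 i
  have hFne : F.Nonempty := hne
  obtain ⟨x, hxF, hxmax'⟩ := hFfin.exists_maximalFor g F hFne
  have hxmax : ∀ y ∈ F, g y ≤ g x := by
    intro y hy
    by_contra h
    push_neg at h
    exact absurd (hxmax' (j := y) hy h.le) (not_le.mpr h)
  -- secondary objective bounds
  have hsec_nonneg : ∀ y : Fin n → ℕ, (0:ℤ) ≤ ∑ i : Fin n, (i.val : ℤ) * y i :=
    fun y => Finset.sum_nonneg fun i _ => by positivity
  have hsec_le : ∀ y ∈ F, (∑ i : Fin n, (i.val : ℤ) * y i) ≤ S := by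
    intro y hy
    apply Finset.sum_le_sum
    intro i _
    have := hy.2 i
    have : (y i : ℤ) ≤ u i := by exact_mod_cast this
    exact mul_le_mul_of_nonneg_left this (by positivity)
  -- optimality in the primary objective
  have hopt : ∀ y ∈ F, ∑ i, (y i : ℤ) * c i ≤ ∑ i, (x i : ℤ) * c i := by
    intro y hy
    by_contra h
    push_neg at h
    have h1 : (∑ i, (x i : ℤ) * c i) + 1 ≤ ∑ i, (y i : ℤ) * c i := h
    have hgy : g x < g y := by
      have := hsec_nonneg y
      have := hsec_le x hxF
      have hSp : (0:ℤ) < S + 1 := by linarith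
      have := mul_le_mul_of_nonneg_left h1 hSp.le
      simp only [hg]
      nlinarith
    exact absurd (hxmax y hy) (not_le.mpr hgy)
  refine ⟨x, hxF, hopt, ?_⟩
  intro i j hcols hlex hxj
  by_contra hxi
  have hxilt : x i < u i := lt_of_le_of_ne (hxF.2 i) hxi
  have hij : i ≠ j := by
    rcases hlex with h | ⟨_, h⟩
    · rintro rfl; exact absurd h (lt_irrefl _)
    · rintro rfl; exact absurd h (lt_irrefl _)
  set y : Fin n → ℕ := Function.update (Function.update x j (x j - 1)) i (x i + 1) with hy
  have hyi : y i = x i + 1 := by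
    rw [hy, Function.update_self]
  have hyj : y j = x j - 1 := by
    rw [hy, Function.update_of_ne (Ne.symm hij), Function.update_self]
  have hyk : ∀ k, k ≠ i → k ≠ j → y k = x k := by
    intro k hki hkj
    rw [hy, Function.update_of_ne hki, Function.update_of_ne hkj]
  have hcast : ∀ k, (y k : ℤ) =
      (x k : ℤ) + (if k = i then 1 else 0) - (if k = j then 1 else 0) := by
    intro k
    by_cases hki : k = i
    · subst hki
      rw [hyi, if_pos rfl, if_neg hij]
      push_cast; ring
    · by_cases hkj : k = j
      · subst hkj
        have h1 : 1 ≤ x k := hxj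
        rw [hyj, if_neg hki, if_pos rfl, Nat.cast_sub h1]
        push_cast; ring
      · rw [hyk k hki hkj, if_neg hki, if_neg hkj]
        ring
  have hsum : ∀ w : Fin n → ℤ,
      ∑ k, w k * (y k : ℤ) = (∑ k, w k * (x k : ℤ)) + w i - w j := by
    intro w
    have hterm : ∀ k, w k * (y k : ℤ) =
        w k * (x k : ℤ) + (if k = i then w k else 0) - (if k = j then w k else 0) := by
      intro k; rw [hcast k]; split_ifs <;> ring
    simp_rw [hterm]
    rw [Finset.sum_sub_distrib, Finset.sum_add_distrib]
    simp [Finset.sum_ite_eq']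
  have hyF : y ∈ F := by
    constructor
    · intro r
      rw [hsum (fun k => A r k), hcols r]
      have := hxF.1 r
      linarith
    · intro k
      by_cases hki : k = i
      · subst hki
        rw [hyi]
        omega
      · by_cases hkj : k = j
        · subst hkj
          rw [hyj]
          have := hxF.2 k
          omega
        · rw [hyk k hki hkj]
          exact hxF.2 k
  have hpy : ∑ k, (y k : ℤ) * c k = (∑ k, (x k : ℤ) * c k) + c i - c j := by
    have h1 : ∑ k, (y k : ℤ) * c k = ∑ k, c k * (y k : ℤ) :=
      Finset.sum_congr rfl fun k _ => mul_comm _ _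
    have h2 : ∑ k, (x k : ℤ) * c k = ∑ k, c k * (x k : ℤ) :=
      Finset.sum_congr rfl fun k _ => mul_comm _ _
    rw [h1, h2, hsum c]
  have hsy : ∑ k : Fin n, (k.val : ℤ) * (y k : ℤ) = (∑ k : Fin n, (k.val : ℤ) * (x k : ℤ)) + i.val - j.val :=
    hsum (fun k => (k.val : ℤ))
  rcases hlex with h | ⟨hc, hji⟩
  · -- primary objective strictly improves
    have : ∑ k, (x k : ℤ) * c k < ∑ k, (y k : ℤ) * c k := by
      rw [hpy]; linarith
    exact absurd (hopt y hyF) (not_le.mpr this)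
  · -- primary same, secondary strictly improves
    have hji' : (j.val : ℤ) < (i.val : ℤ) := by exact_mod_cast hji
    have : g x < g y := by
      simp only [hg]
      rw [hpy, hsy, hc]
      nlinarith [hji']
    exact absurd (hxmax y hyF) (not_le.mpr this)
end
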